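/- Let γ : ℝ → ℝ² be a C² curve with γ(t + 2π) = γ(t) and γ(t + π) = −γ(t) for all t, and set A := (1/2)∫₀^{2π} ω(γ(t),γ'(t)) dt. Then ∬_{[0,π]²} [ω(γ''(t₁),γ(t₂)) + ω(γ(t₁),γ''(t₂))] · ω(γ'(t₁),γ'(t₂)) dt₁dt₂ = −A · ∫₀^π ω(γ'(t),γ''(t)) dt. -/

import Mathlib

open Real

/-- The standard area form (determinant) on `ℝ²`. -/
def omega2 (u v : ℝ × ℝ) : ℝ := u.1 * v.2 - u.2 * v.1

private lemma hasDerivAt_fst' {f : ℝ → ℝ × ℝ} {f' : ℝ × ℝ} {t : ℝ} (h : HasDerivAt f f' t) :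
    HasDerivAt (fun s => (f s).1) f'.1 t := by
  simpa using (h.hasFDerivAt.fst).hasDerivAt

private lemma hasDerivAt_snd' {f : ℝ → ℝ × ℝ} {f' : ℝ × ℝ} {t : ℝ} (h : HasDerivAt f f' t) :
    HasDerivAt (fun s => (f s).2) f'.2 t := by
  simpa using (h.hasFDerivAt.snd).hasDerivAt

private lemma integral_deriv_zero {F f : ℝ → ℝ}
    (hF : ∀ t, HasDerivAt F (f t) t)
    (hf : IntervalIntegrable f MeasureTheory.volume 0 π)
    (hb : F π = F 0) : (∫ t in (0:ℝ)..π, f t) = 0 := by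
  rw [intervalIntegral.integral_eq_sub_of_hasDerivAt (fun t _ => hF t) hf, hb, sub_self]

theorem stmt_6 (γ : ℝ → ℝ × ℝ) (hγ : ContDiff ℝ 2 γ)
    (hper : ∀ t : ℝ, γ (t + 2 * π) = γ t)
    (hsym : ∀ t : ℝ, γ (t + π) = -γ t)
    (A : ℝ) (hA : A = (1 / 2) * ∫ t in (0:ℝ)..(2 * π), omega2 (γ t) (deriv γ t)) :
    (∫ t₁ in (0:ℝ)..π, ∫ t₂ in (0:ℝ)..π,
        (omega2 (deriv (deriv γ) t₁) (γ t₂) + omega2 (γ t₁) (deriv (deriv γ) t₂)) *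
          omega2 (deriv γ t₁) (deriv γ t₂)) =
      -A * ∫ t in (0:ℝ)..π, omega2 (deriv γ t) (deriv (deriv γ) t) := by
  -- basic smoothness facts
  have hγ2 : ContDiff ℝ (1 + 1) γ := by
    convert hγ using 2
    exact one_add_one_eq_two
  have hd1 : Differentiable ℝ γ := hγ.differentiable (by norm_num)
  have hc1 : ContDiff ℝ 1 (deriv γ) := (contDiff_succ_iff_deriv.mp hγ2).2.2
  have hd2 : Differentiable ℝ (deriv γ) := hc1.differentiable one_ne_zero
  have hcγ : Continuous γ := hγ.continuous
  have hcγ' : Continuous (deriv γ) := hd2.continuous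
  have hcγ'' : Continuous (deriv (deriv γ)) := hc1.continuous_deriv le_rfl
  have hcx : Continuous fun t => (γ t).1 := hcγ.fst
  have hcy : Continuous fun t => (γ t).2 := hcγ.snd
  have hcx' : Continuous fun t => (deriv γ t).1 := hcγ'.fst
  have hcy' : Continuous fun t => (deriv γ t).2 := hcγ'.snd
  have hcx'' : Continuous fun t => (deriv (deriv γ) t).1 := hcγ''.fst
  have hcy'' : Continuous fun t => (deriv (deriv γ) t).2 := hcγ''.snd
  -- antiperiodicity of derivatives
  have haγ' : ∀ t : ℝ, deriv γ (t + π) = -deriv γ t := by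
    intro t
    have h1 : deriv (fun s => γ (s + π)) t = deriv γ (t + π) := deriv_comp_add_const γ π t
    have h2 : (fun s => γ (s + π)) = fun s => -γ s := funext hsym
    rw [h2, deriv.fun_neg] at h1
    exact h1.symm
  have haγ'' : ∀ t : ℝ, deriv (deriv γ) (t + π) = -deriv (deriv γ) t := by
    intro t
    have h1 : deriv (fun s => deriv γ (s + π)) t = deriv (deriv γ) (t + π) :=
      deriv_comp_add_const (deriv γ) π t
    have h2 : (fun s => deriv γ (s + π)) = fun s => -deriv γ s := funext haγ'
    rw [h2, deriv.fun_neg] at h1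
    exact h1.symm
  have hb0 : γ π = -γ 0 := by have := hsym 0; rwa [zero_add] at this
  have hb1 : deriv γ π = -deriv γ 0 := by have := haγ' 0; rwa [zero_add] at this
  -- derivatives of component functions
  have hx : ∀ t : ℝ, HasDerivAt (fun s => (γ s).1) ((deriv γ t).1) t :=
    fun t => hasDerivAt_fst' (hd1 t).hasDerivAt
  have hy : ∀ t : ℝ, HasDerivAt (fun s => (γ s).2) ((deriv γ t).2) t :=
    fun t => hasDerivAt_snd' (hd1 t).hasDerivAt
  have hx' : ∀ t : ℝ, HasDerivAt (fun s => (deriv γ s).1) ((deriv (deriv γ) t).1) t :=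
    fun t => hasDerivAt_fst' (hd2 t).hasDerivAt
  have hy' : ∀ t : ℝ, HasDerivAt (fun s => (deriv γ s).2) ((deriv (deriv γ) t).2) t :=
    fun t => hasDerivAt_snd' (hd2 t).hasDerivAt
  -- the basic single integrals
  set P := ∫ t in (0:ℝ)..π, (γ t).1 * (deriv γ t).2 with hP
  set Q := ∫ t in (0:ℝ)..π, (γ t).2 * (deriv γ t).1 with hQ
  set S := ∫ t in (0:ℝ)..π, (deriv (deriv γ) t).1 * (deriv γ t).2 with hS
  -- basic integrabilities
  have iyy' : IntervalIntegrable (fun t => (γ t).2 * (deriv γ t).2) MeasureTheory.volume 0 π :=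
    (hcy.mul hcy').intervalIntegrable 0 π
  have iyx' : IntervalIntegrable (fun t => (γ t).2 * (deriv γ t).1) MeasureTheory.volume 0 π :=
    (hcy.mul hcx').intervalIntegrable 0 π
  have ixy' : IntervalIntegrable (fun t => (γ t).1 * (deriv γ t).2) MeasureTheory.volume 0 π :=
    (hcx.mul hcy').intervalIntegrable 0 π
  have ixx' : IntervalIntegrable (fun t => (γ t).1 * (deriv γ t).1) MeasureTheory.volume 0 π :=
    (hcx.mul hcx').intervalIntegrable 0 π
  have iy'y'' : IntervalIntegrable (fun t => (deriv γ t).2 * (deriv (deriv γ) t).2)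
      MeasureTheory.volume 0 π := (hcy'.mul hcy'').intervalIntegrable 0 π
  have ix'y'' : IntervalIntegrable (fun t => (deriv γ t).1 * (deriv (deriv γ) t).2)
      MeasureTheory.volume 0 π := (hcx'.mul hcy'').intervalIntegrable 0 π
  have ix''y' : IntervalIntegrable (fun t => (deriv (deriv γ) t).1 * (deriv γ t).2)
      MeasureTheory.volume 0 π := (hcx''.mul hcy').intervalIntegrable 0 π
  have ix'x'' : IntervalIntegrable (fun t => (deriv γ t).1 * (deriv (deriv γ) t).1)
      MeasureTheory.volume 0 π := (hcx'.mul hcx'').intervalIntegrable 0 π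
  have iy'x'' : IntervalIntegrable (fun t => (deriv γ t).2 * (deriv (deriv γ) t).1)
      MeasureTheory.volume 0 π := (hcy'.mul hcx'').intervalIntegrable 0 π
  -- integration by parts facts
  have hyy'0 : (∫ t in (0:ℝ)..π, (γ t).2 * (deriv γ t).2) = 0 := by
    refine integral_deriv_zero (F := fun t => (γ t).2 * (γ t).2 / 2) (fun t => ?_) iyy' ?_
    · have h : HasDerivAt (fun s => (γ s).2 * (γ s).2 / 2) _ t := ((hy t).mul (hy t)).div_const 2
      convert h using 1
      ring
    · simp only [hb0, Prod.snd_neg]; ring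
  have hxx'0 : (∫ t in (0:ℝ)..π, (γ t).1 * (deriv γ t).1) = 0 := by
    refine integral_deriv_zero (F := fun t => (γ t).1 * (γ t).1 / 2) (fun t => ?_) ixx' ?_
    · have h : HasDerivAt (fun s => (γ s).1 * (γ s).1 / 2) _ t := ((hx t).mul (hx t)).div_const 2
      convert h using 1
      ring
    · simp only [hb0, Prod.fst_neg]; ring
  have hy'y''0 : (∫ t in (0:ℝ)..π, (deriv γ t).2 * (deriv (deriv γ) t).2) = 0 := by
    refine integral_deriv_zero (F := fun t => (deriv γ t).2 * (deriv γ t).2 / 2)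
      (fun t => ?_) iy'y'' ?_
    · have h : HasDerivAt (fun s => (deriv γ s).2 * (deriv γ s).2 / 2) _ t := ((hy' t).mul (hy' t)).div_const 2
      convert h using 1
      ring
    · simp only [hb1, Prod.snd_neg]; ring
  have hx'x''0 : (∫ t in (0:ℝ)..π, (deriv γ t).1 * (deriv (deriv γ) t).1) = 0 := by
    refine integral_deriv_zero (F := fun t => (deriv γ t).1 * (deriv γ t).1 / 2)
      (fun t => ?_) ix'x'' ?_
    · have h : HasDerivAt (fun s => (deriv γ s).1 * (deriv γ s).1 / 2) _ t := ((hx' t).mul (hx' t)).div_const 2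
      convert h using 1
      ring
    · simp only [hb1, Prod.fst_neg]; ring
  have hsum0 : (∫ t in (0:ℝ)..π,
      ((deriv (deriv γ) t).1 * (deriv γ t).2 + (deriv γ t).1 * (deriv (deriv γ) t).2)) = 0 := by
    refine integral_deriv_zero (F := fun t => (deriv γ t).1 * (deriv γ t).2)
      (fun t => (hx' t).mul (hy' t)) (ix''y'.add ix'y'') ?_
    simp only [hb1, Prod.fst_neg, Prod.snd_neg]; ring
  have hx'y'' : (∫ t in (0:ℝ)..π, (deriv γ t).1 * (deriv (deriv γ) t).2) = -S := by
    rw [intervalIntegral.integral_add ix''y' ix'y''] at hsum0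
    rw [← hS] at hsum0
    linarith
  have hy'x'' : (∫ t in (0:ℝ)..π, (deriv γ t).2 * (deriv (deriv γ) t).1) = S := by
    rw [hS]
    apply intervalIntegral.integral_congr
    intro t _
    exact mul_comm _ _
  -- value of A
  have hAval : A = P - Q := by
    have hgper : Function.Periodic (fun t => omega2 (γ t) (deriv γ t)) π := by
      intro t
      simp only [omega2, hsym t, haγ' t, Prod.fst_neg, Prod.snd_neg]
      ring
    have hgint : ∀ a b : ℝ, IntervalIntegrable (fun t => omega2 (γ t) (deriv γ t))
        MeasureTheory.volume a b := by
      intro a b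
      apply Continuous.intervalIntegrable
      simp only [omega2]
      exact (hcx.mul hcy').sub (hcy.mul hcx')
    have hsplit : (∫ t in (0:ℝ)..(2*π), omega2 (γ t) (deriv γ t)) =
        (∫ t in (0:ℝ)..π, omega2 (γ t) (deriv γ t)) +
        ∫ t in π..(2*π), omega2 (γ t) (deriv γ t) :=
      (intervalIntegral.integral_add_adjacent_intervals (hgint 0 π) (hgint π (2*π))).symm
    have h2eq : (∫ t in π..(2*π), omega2 (γ t) (deriv γ t)) =
        ∫ t in (0:ℝ)..π, omega2 (γ t) (deriv γ t) := by
      have h := hgper.intervalIntegral_add_eq π 0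
      rw [show π + π = 2*π by ring, zero_add] at h
      exact h
    have hval : (∫ t in (0:ℝ)..π, omega2 (γ t) (deriv γ t)) = P - Q := by
      simp only [omega2]
      rw [intervalIntegral.integral_sub ixy' iyx', ← hP, ← hQ]
    rw [hA, hsplit, h2eq, hval]
    ring
  -- pointwise expansion of the double integrand
  have key : ∀ t₁ t₂ : ℝ,
      (omega2 (deriv (deriv γ) t₁) (γ t₂) + omega2 (γ t₁) (deriv (deriv γ) t₂)) *
        omega2 (deriv γ t₁) (deriv γ t₂) =
      ((deriv (deriv γ) t₁).1 * (deriv γ t₁).1) * ((γ t₂).2 * (deriv γ t₂).2)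
      - ((deriv (deriv γ) t₁).1 * (deriv γ t₁).2) * ((γ t₂).2 * (deriv γ t₂).1)
      - ((deriv (deriv γ) t₁).2 * (deriv γ t₁).1) * ((γ t₂).1 * (deriv γ t₂).2)
      + ((deriv (deriv γ) t₁).2 * (deriv γ t₁).2) * ((γ t₂).1 * (deriv γ t₂).1)
      + (((γ t₁).1 * (deriv γ t₁).1) * ((deriv γ t₂).2 * (deriv (deriv γ) t₂).2)
      - ((γ t₁).1 * (deriv γ t₁).2) * ((deriv γ t₂).1 * (deriv (deriv γ) t₂).2)
      - ((γ t₁).2 * (deriv γ t₁).1) * ((deriv (deriv γ) t₂).1 * (deriv γ t₂).2)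
      + ((γ t₁).2 * (deriv γ t₁).2) * ((deriv γ t₂).1 * (deriv (deriv γ) t₂).1)) := by
    intro t₁ t₂
    simp only [omega2]
    ring
  -- inner integral
  have inner : ∀ t₁ : ℝ,
      (∫ t₂ in (0:ℝ)..π,
        (omega2 (deriv (deriv γ) t₁) (γ t₂) + omega2 (γ t₁) (deriv (deriv γ) t₂)) *
          omega2 (deriv γ t₁) (deriv γ t₂)) =
      ((deriv (deriv γ) t₁).1 * (deriv γ t₁).2) * (-Q)
      + ((deriv γ t₁).1 * (deriv (deriv γ) t₁).2) * (-P)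
      + ((γ t₁).1 * (deriv γ t₁).2) * S
      + ((γ t₁).2 * (deriv γ t₁).1) * (-S) := by
    intro t₁
    simp only [key]
    rw [intervalIntegral.integral_add
        ((((iyy'.const_mul _).sub (iyx'.const_mul _)).sub (ixy'.const_mul _)).add
          (ixx'.const_mul _))
        ((((iy'y''.const_mul _).sub (ix'y''.const_mul _)).sub (ix''y'.const_mul _)).add
          (ix'x''.const_mul _)),
      intervalIntegral.integral_add
        (((iyy'.const_mul _).sub (iyx'.const_mul _)).sub (ixy'.const_mul _))
        (ixx'.const_mul _),
      intervalIntegral.integral_sub ((iyy'.const_mul _).sub (iyx'.const_mul _))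
        (ixy'.const_mul _),
      intervalIntegral.integral_sub (iyy'.const_mul _) (iyx'.const_mul _),
      intervalIntegral.integral_add
        (((iy'y''.const_mul _).sub (ix'y''.const_mul _)).sub (ix''y'.const_mul _))
        (ix'x''.const_mul _),
      intervalIntegral.integral_sub ((iy'y''.const_mul _).sub (ix'y''.const_mul _))
        (ix''y'.const_mul _),
      intervalIntegral.integral_sub (iy'y''.const_mul _) (ix'y''.const_mul _)]
    simp only [intervalIntegral.integral_const_mul]
    rw [hyy'0, hxx'0, hy'y''0, hx'x''0, hx'y'', ← hP, ← hQ, ← hS]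
    ring
  -- outer integral
  simp only [inner]
  have o1 : IntervalIntegrable (fun t => ((deriv (deriv γ) t).1 * (deriv γ t).2) * (-Q))
      MeasureTheory.volume 0 π := ix''y'.mul_const _
  have o2 : IntervalIntegrable (fun t => ((deriv γ t).1 * (deriv (deriv γ) t).2) * (-P))
      MeasureTheory.volume 0 π := ix'y''.mul_const _
  have o3 : IntervalIntegrable (fun t => ((γ t).1 * (deriv γ t).2) * S)
      MeasureTheory.volume 0 π := ixy'.mul_const _
  have o4 : IntervalIntegrable (fun t => ((γ t).2 * (deriv γ t).1) * (-S))
      MeasureTheory.volume 0 π := iyx'.mul_const _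
  rw [intervalIntegral.integral_add ((o1.add o2).add o3) o4,
    intervalIntegral.integral_add (o1.add o2) o3,
    intervalIntegral.integral_add o1 o2]
  simp only [intervalIntegral.integral_mul_const]
  rw [← hS, hx'y'', ← hP, ← hQ]
  -- right-hand side
  have hRHS : (∫ t in (0:ℝ)..π, omega2 (deriv γ t) (deriv (deriv γ) t)) = -S - S := by
    simp only [omega2]
    rw [intervalIntegral.integral_sub ix'y'' iy'x'', hx'y'', hy'x'']
  rw [hRHS, hAval]
  ring
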